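/- In the setting above, the set {(x,y,z) ∈ ℝ³ : z > 0} ∪ {A₀, A₁, A₂, A₃} (identified with upper triangular matrices) is lamination convex, contains K = {A₀, A₁, A₂, A₃, X₀}, and does not contain P₀. Consequently P₀ ∉ L(K) while P₀ ∈ closure(L(K)), so L(K) is not compact. -/

import Mathlib

set_option maxHeartbeats 1000000

def LamConvexTri (S : Set (ℝ × ℝ × ℝ)) : Prop :=
  ∀ p ∈ S, ∀ q ∈ S, p ≠ q → (p.1 - q.1) * (p.2.1 - q.2.1) = 0 → segment ℝ p q ⊆ S

def LTri (K : Set (ℝ × ℝ × ℝ)) : Set (ℝ × ℝ × ℝ) :=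
  ⋂₀ {S | K ⊆ S ∧ LamConvexTri S}

lemma subset_LTri (K : Set (ℝ × ℝ × ℝ)) : K ⊆ LTri K :=
  fun _ hx => Set.mem_sInter.2 fun _ hS => hS.1 hx

lemma LTri_subset {K S : Set (ℝ × ℝ × ℝ)} (h1 : K ⊆ S) (h2 : LamConvexTri S) :
    LTri K ⊆ S := fun _ hx => Set.mem_sInter.1 hx S ⟨h1, h2⟩

lemma lamConvex_LTri (K : Set (ℝ × ℝ × ℝ)) : LamConvexTri (LTri K) := by
  intro p hp q hq hne hrk r hr
  refine Set.mem_sInter.2 fun S hS => ?_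
  exact hS.2 p (Set.mem_sInter.1 hp S hS) q (Set.mem_sInter.1 hq S hS) hne hrk hr

lemma seg_step {L : Set (ℝ × ℝ × ℝ)} (hL : LamConvexTri L)
    {p q : ℝ × ℝ × ℝ} (hp : p ∈ L) (hq : q ∈ L) (hne : p ≠ q)
    (hrk : (p.1 - q.1) * (p.2.1 - q.2.1) = 0) {a b : ℝ}
    (ha : 0 ≤ a) (hb : 0 ≤ b) (hab : a + b = 1) : a • p + b • q ∈ L :=
  hL p hp q hq hne hrk ⟨a, b, ha, hb, hab, rfl⟩

theorem stmt17 (x₁ x₂ y₁ y₂ α₀ α₁ α₂ α₃ z₀ : ℝ)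
    (hx : x₁ < x₂) (hy : y₂ < y₁)
    (hα₀ : 0 < α₀) (hα₁ : 0 < α₁) (hα₂ : 0 < α₂) (hα₃ : 0 < α₃) (hz₀ : 0 < z₀)
    (P₀ A₀ A₁ A₂ A₃ X₀ : ℝ × ℝ × ℝ)
    (hP₀ : P₀ = (x₁, y₂, 0))
    (hA₀ : A₀ = (x₁, y₁ + α₀, 0)) (hA₁ : A₁ = (x₂ + α₁, y₁, 0))
    (hA₂ : A₂ = (x₂, y₂ - α₂, 0)) (hA₃ : A₃ = (x₁ - α₃, y₂, 0))
    (hX₀ : X₀ = P₀ + (0, 0, z₀)) :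
    LamConvexTri ({p : ℝ × ℝ × ℝ | 0 < p.2.2} ∪ {A₀, A₁, A₂, A₃}) ∧
      ({A₀, A₁, A₂, A₃, X₀} : Set (ℝ × ℝ × ℝ)) ⊆
        {p : ℝ × ℝ × ℝ | 0 < p.2.2} ∪ {A₀, A₁, A₂, A₃} ∧
      P₀ ∉ ({p : ℝ × ℝ × ℝ | 0 < p.2.2} ∪ {A₀, A₁, A₂, A₃}) ∧
      P₀ ∉ LTri {A₀, A₁, A₂, A₃, X₀} ∧
      P₀ ∈ closure (LTri {A₀, A₁, A₂, A₃, X₀}) ∧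
      ¬ IsCompact (LTri {A₀, A₁, A₂, A₃, X₀}) := by
  subst hP₀ hA₀ hA₁ hA₂ hA₃ hX₀
  have hX₀' : ((x₁, y₂, 0) : ℝ × ℝ × ℝ) + (0, 0, z₀) = (x₁, y₂, z₀) := by
    simp [Prod.ext_iff]
  rw [hX₀']
  set S : Set (ℝ × ℝ × ℝ) :=
    {p : ℝ × ℝ × ℝ | 0 < p.2.2} ∪
      {(x₁, y₁ + α₀, 0), (x₂ + α₁, y₁, 0), (x₂, y₂ - α₂, 0), (x₁ - α₃, y₂, 0)} with hS
  set K : Set (ℝ × ℝ × ℝ) :=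
    {(x₁, y₁ + α₀, 0), (x₂ + α₁, y₁, 0), (x₂, y₂ - α₂, 0), (x₁ - α₃, y₂, 0), (x₁, y₂, z₀)}
    with hK
  -- zero z-coordinate of the A's
  have hAz : ∀ p : ℝ × ℝ × ℝ,
      p ∈ ({(x₁, y₁ + α₀, 0), (x₂ + α₁, y₁, 0), (x₂, y₂ - α₂, 0), (x₁ - α₃, y₂, 0)} :
        Set (ℝ × ℝ × ℝ)) → p.2.2 = 0 := by
    rintro p (rfl | rfl | rfl | rfl) <;> rfl
  -- S is lamination convex
  have hSconv : LamConvexTri S := by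
    rintro p hp q hq hne hrk r ⟨a, b, ha, hb, hab, rfl⟩
    have hz : (a • p + b • q).2.2 = a * p.2.2 + b * q.2.2 := rfl
    rcases hp with hp | hp
    · rcases hq with hq | hq
      · left
        show 0 < (a • p + b • q).2.2
        rw [hz]
        rcases ha.eq_or_lt with h | h
        · have hb1 : b = 1 := by linarith
          rw [← h, hb1]; simpa using hq
        · nlinarith [mul_nonneg hb hq.le, mul_pos h (show (0:ℝ) < p.2.2 from hp)]
      · rcases ha.eq_or_lt with h | h
        · have hb1 : b = 1 := by linarith
          rw [← h, hb1]; rw [zero_smul, one_smul, zero_add]; exact Or.inr hq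
        · left
          show 0 < (a • p + b • q).2.2
          rw [hz, hAz q hq]
          have := mul_pos h (show (0:ℝ) < p.2.2 from hp)
          linarith
    · rcases hq with hq | hq
      · rcases hb.eq_or_lt with h | h
        · have ha1 : a = 1 := by linarith
          rw [← h, ha1]; rw [zero_smul, one_smul, add_zero]; exact Or.inr hp
        · left
          show 0 < (a • p + b • q).2.2
          rw [hz, hAz p hp]
          have := mul_pos h (show (0:ℝ) < q.2.2 from hq)
          linarith
      · exfalso
        rcases hp with rfl | rfl | rfl | rfl <;> rcases hq with rfl | rfl | rfl | rfl <;>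
          first
            | exact hne rfl
            | (rcases mul_eq_zero.mp hrk with h | h <;> simp only [] at h <;> nlinarith)
  -- K ⊆ S
  have hKS : K ⊆ S := by
    rintro p (rfl | rfl | rfl | rfl | rfl)
    · exact Or.inr (Or.inl rfl)
    · exact Or.inr (Or.inr (Or.inl rfl))
    · exact Or.inr (Or.inr (Or.inr (Or.inl rfl)))
    · exact Or.inr (Or.inr (Or.inr (Or.inr rfl)))
    · exact Or.inl hz₀
  -- P₀ ∉ S
  have hP₀S : ((x₁, y₂, 0) : ℝ × ℝ × ℝ) ∉ S := by
    rintro (h | h)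
    · simp only [Set.mem_setOf_eq] at h; exact lt_irrefl 0 h
    · simp only [Set.mem_insert_iff, Set.mem_singleton_iff, Prod.mk.injEq] at h
      rcases h with ⟨h1, h2, -⟩ | ⟨h1, h2, -⟩ | ⟨h1, h2, -⟩ | ⟨h1, h2, -⟩ <;> linarith
  -- the lamination hull
  have hLC := lamConvex_LTri K
  have hA0L : ((x₁, y₁ + α₀, 0) : ℝ × ℝ × ℝ) ∈ LTri K := subset_LTri K (by simp [hK])
  have hA1L : ((x₂ + α₁, y₁, 0) : ℝ × ℝ × ℝ) ∈ LTri K := subset_LTri K (by simp [hK])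
  have hA2L : ((x₂, y₂ - α₂, 0) : ℝ × ℝ × ℝ) ∈ LTri K := subset_LTri K (by simp [hK])
  have hA3L : ((x₁ - α₃, y₂, 0) : ℝ × ℝ × ℝ) ∈ LTri K := subset_LTri K (by simp [hK])
  have hX0L : ((x₁, y₂, z₀) : ℝ × ℝ × ℝ) ∈ LTri K := subset_LTri K (by simp [hK])
  -- denominators
  have hD₀ : (0:ℝ) < y₁ + α₀ - y₂ := by linarith
  have hD₀' : (y₁ + α₀ - y₂ : ℝ) ≠ 0 := hD₀.ne'
  have hD₁ : (0:ℝ) < x₂ + α₁ - x₁ := by linarith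
  have hD₁' : (x₂ + α₁ - x₁ : ℝ) ≠ 0 := hD₁.ne'
  have hD₂ : (0:ℝ) < y₁ - y₂ + α₂ := by linarith
  have hD₂' : (y₁ - y₂ + α₂ : ℝ) ≠ 0 := hD₂.ne'
  have hD₃ : (0:ℝ) < x₂ - x₁ + α₃ := by linarith
  have hD₃' : (x₂ - x₁ + α₃ : ℝ) ≠ 0 := hD₃.ne'
  set c : ℝ := (α₀ / (y₁ + α₀ - y₂)) * (α₁ / (x₂ + α₁ - x₁)) *
      (α₂ / (y₁ - y₂ + α₂)) * (α₃ / (x₂ - x₁ + α₃)) with hc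
  have hc0 : 0 < c := by
    rw [hc]; positivity
  have hc1 : c < 1 := by
    rw [hc]
    have h0 : α₀ / (y₁ + α₀ - y₂) < 1 := (div_lt_one hD₀).2 (by linarith)
    have h1 : α₁ / (x₂ + α₁ - x₁) < 1 := (div_lt_one hD₁).2 (by linarith)
    have h2 : α₂ / (y₁ - y₂ + α₂) < 1 := (div_lt_one hD₂).2 (by linarith)
    have h3 : α₃ / (x₂ - x₁ + α₃) < 1 := (div_lt_one hD₃).2 (by linarith)
    have p0 : (0:ℝ) ≤ α₀ / (y₁ + α₀ - y₂) := by positivity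
    have p1 : (0:ℝ) ≤ α₁ / (x₂ + α₁ - x₁) := by positivity
    have p2 : (0:ℝ) ≤ α₂ / (y₁ - y₂ + α₂) := by positivity
    have p3 : (0:ℝ) ≤ α₃ / (x₂ - x₁ + α₃) := by positivity
    have l1 := mul_le_of_le_one_right p0 h1.le
    have l2 := mul_le_of_le_one_right (mul_nonneg p0 p1) h2.le
    have l3 := mul_le_of_le_one_right (mul_nonneg (mul_nonneg p0 p1) p2) h3.le
    linarith
  -- the staircase step
  have hstep : ∀ z : ℝ, 0 < z → ((x₁, y₂, z) : ℝ × ℝ × ℝ) ∈ LTri K →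
      ((x₁, y₂, c * z) : ℝ × ℝ × ℝ) ∈ LTri K := by
    intro z hzpos hmem
    -- step 1 : towards A₀, fixed x = x₁, reach y = y₁
    have h1 : ((x₁, y₁, (α₀ / (y₁ + α₀ - y₂)) * z) : ℝ × ℝ × ℝ) ∈ LTri K := by
      have hne : ((x₁, y₁ + α₀, 0) : ℝ × ℝ × ℝ) ≠ (x₁, y₂, z) := by
        intro h; rw [Prod.mk.injEq, Prod.mk.injEq] at h; linarith [h.2.2]
      have := seg_step hLC hA0L hmem hne (by show (x₁ - x₁) * _ = 0; ring)
        (a := (y₁ - y₂) / (y₁ + α₀ - y₂)) (b := α₀ / (y₁ + α₀ - y₂))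
        (div_nonneg (by linarith) hD₀.le) (div_nonneg hα₀.le hD₀.le)
        (by rw [← add_div, div_eq_one_iff_eq hD₀']; ring)
      have heq : ((y₁ - y₂) / (y₁ + α₀ - y₂)) • ((x₁, y₁ + α₀, 0) : ℝ × ℝ × ℝ) +
          (α₀ / (y₁ + α₀ - y₂)) • ((x₁, y₂, z) : ℝ × ℝ × ℝ) =
          (x₁, y₁, (α₀ / (y₁ + α₀ - y₂)) * z) := by
        simp only [Prod.smul_mk, smul_eq_mul, Prod.mk_add_mk, Prod.mk.injEq]
        refine ⟨?_, ?_, ?_⟩ <;> field_simp <;> try ring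
      rwa [heq] at this
    -- step 2 : towards A₁, fixed y = y₁, reach x = x₂
    set z1 : ℝ := (α₀ / (y₁ + α₀ - y₂)) * z with hz1
    have hz1pos : 0 < z1 := by rw [hz1]; positivity
    have h2 : ((x₂, y₁, (α₁ / (x₂ + α₁ - x₁)) * z1) : ℝ × ℝ × ℝ) ∈ LTri K := by
      have hne : ((x₂ + α₁, y₁, 0) : ℝ × ℝ × ℝ) ≠ (x₁, y₁, z1) := by
        intro h; rw [Prod.mk.injEq, Prod.mk.injEq] at h; linarith [h.2.2]
      have := seg_step hLC hA1L h1 hne (by show _ * (y₁ - y₁) = 0; ring)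
        (a := (x₂ - x₁) / (x₂ + α₁ - x₁)) (b := α₁ / (x₂ + α₁ - x₁))
        (div_nonneg (by linarith) hD₁.le) (div_nonneg hα₁.le hD₁.le)
        (by rw [← add_div, div_eq_one_iff_eq hD₁']; ring)
      have heq : ((x₂ - x₁) / (x₂ + α₁ - x₁)) • ((x₂ + α₁, y₁, 0) : ℝ × ℝ × ℝ) +
          (α₁ / (x₂ + α₁ - x₁)) • ((x₁, y₁, z1) : ℝ × ℝ × ℝ) =
          (x₂, y₁, (α₁ / (x₂ + α₁ - x₁)) * z1) := by
        simp only [Prod.smul_mk, smul_eq_mul, Prod.mk_add_mk, Prod.mk.injEq]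
        refine ⟨?_, ?_, ?_⟩ <;> field_simp <;> try ring
      rwa [heq] at this
    -- step 3 : towards A₂, fixed x = x₂, reach y = y₂
    set z2 : ℝ := (α₁ / (x₂ + α₁ - x₁)) * z1 with hz2
    have hz2pos : 0 < z2 := by rw [hz2]; positivity
    have h3 : ((x₂, y₂, (α₂ / (y₁ - y₂ + α₂)) * z2) : ℝ × ℝ × ℝ) ∈ LTri K := by
      have hne : ((x₂, y₂ - α₂, 0) : ℝ × ℝ × ℝ) ≠ (x₂, y₁, z2) := by
        intro h; rw [Prod.mk.injEq, Prod.mk.injEq] at h; linarith [h.2.2]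
      have := seg_step hLC hA2L h2 hne (by show (x₂ - x₂) * _ = 0; ring)
        (a := (y₁ - y₂) / (y₁ - y₂ + α₂)) (b := α₂ / (y₁ - y₂ + α₂))
        (div_nonneg (by linarith) hD₂.le) (div_nonneg hα₂.le hD₂.le)
        (by rw [← add_div, div_eq_one_iff_eq hD₂']; try ring)
      have heq : ((y₁ - y₂) / (y₁ - y₂ + α₂)) • ((x₂, y₂ - α₂, 0) : ℝ × ℝ × ℝ) +
          (α₂ / (y₁ - y₂ + α₂)) • ((x₂, y₁, z2) : ℝ × ℝ × ℝ) =
          (x₂, y₂, (α₂ / (y₁ - y₂ + α₂)) * z2) := by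
        simp only [Prod.smul_mk, smul_eq_mul, Prod.mk_add_mk, Prod.mk.injEq]
        refine ⟨?_, ?_, ?_⟩ <;> field_simp <;> try ring
      rwa [heq] at this
    -- step 4 : towards A₃, fixed y = y₂, reach x = x₁
    set z3 : ℝ := (α₂ / (y₁ - y₂ + α₂)) * z2 with hz3
    have hz3pos : 0 < z3 := by rw [hz3]; positivity
    have h4 : ((x₁, y₂, (α₃ / (x₂ - x₁ + α₃)) * z3) : ℝ × ℝ × ℝ) ∈ LTri K := by
      have hne : ((x₁ - α₃, y₂, 0) : ℝ × ℝ × ℝ) ≠ (x₂, y₂, z3) := by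
        intro h; rw [Prod.mk.injEq, Prod.mk.injEq] at h; linarith [h.2.2]
      have := seg_step hLC hA3L h3 hne (by show _ * (y₂ - y₂) = 0; ring)
        (a := (x₂ - x₁) / (x₂ - x₁ + α₃)) (b := α₃ / (x₂ - x₁ + α₃))
        (div_nonneg (by linarith) hD₃.le) (div_nonneg hα₃.le hD₃.le)
        (by rw [← add_div, div_eq_one_iff_eq hD₃']; try ring)
      have heq : ((x₂ - x₁) / (x₂ - x₁ + α₃)) • ((x₁ - α₃, y₂, 0) : ℝ × ℝ × ℝ) +
          (α₃ / (x₂ - x₁ + α₃)) • ((x₂, y₂, z3) : ℝ × ℝ × ℝ) =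
          (x₁, y₂, (α₃ / (x₂ - x₁ + α₃)) * z3) := by
        simp only [Prod.smul_mk, smul_eq_mul, Prod.mk_add_mk, Prod.mk.injEq]
        refine ⟨?_, ?_, ?_⟩ <;> field_simp <;> try ring
      rwa [heq] at this
    have hcz : c * z = (α₃ / (x₂ - x₁ + α₃)) * z3 := by
      rw [hz3, hz2, hz1, hc]; ring
    rwa [hcz]
  -- the sequence
  have hseq : ∀ n : ℕ, ((x₁, y₂, c ^ n * z₀) : ℝ × ℝ × ℝ) ∈ LTri K := by
    intro n
    induction n with
    | zero => simpa using hX0L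
    | succ n ih =>
      have hpos : 0 < c ^ n * z₀ := by positivity
      have := hstep _ hpos ih
      have hcc : c * (c ^ n * z₀) = c ^ (n + 1) * z₀ := by ring
      rwa [hcc] at this
  -- closure membership
  have hcl : ((x₁, y₂, 0) : ℝ × ℝ × ℝ) ∈ closure (LTri K) := by
    have htend : Filter.Tendsto (fun n : ℕ => ((x₁, y₂, c ^ n * z₀) : ℝ × ℝ × ℝ))
        Filter.atTop (nhds (x₁, y₂, 0)) := by
      have h0 : Filter.Tendsto (fun n : ℕ => c ^ n * z₀) Filter.atTop (nhds 0) := by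
        have := tendsto_pow_atTop_nhds_zero_of_lt_one hc0.le hc1
        simpa using this.mul_const z₀
      rw [nhds_prod_eq, nhds_prod_eq]
      exact tendsto_const_nhds.prodMk (tendsto_const_nhds.prodMk h0)
    exact mem_closure_of_tendsto htend (Filter.Eventually.of_forall hseq)
  have hnotin : ((x₁, y₂, 0) : ℝ × ℝ × ℝ) ∉ LTri K :=
    fun h => hP₀S (LTri_subset hKS hSconv h)
  refine ⟨hSconv, hKS, hP₀S, hnotin, hcl, fun hcomp => ?_⟩
  exact hnotin (by rw [← hcomp.isClosed.closure_eq]; exact hcl)
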